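/- arXiv:1603.08995 — 5 statements merged into one kernel-verified Lean document; each statement's English description precedes it below -/
import Mathlib

section
/- (Knudsen's theorem.) Assume (Rμc − C_p c)/C_w ≥ 1, so that n_b = ⌊(Rμc − C_p c)/C_w⌋ ≥ 1. Then there exists a natural number n_so with 1 ≤ n_so ≤ n_b such that U_sw(n) ≤ U_sw(n_so) for every natural number n; in particular U_sw(n_b) ≤ U_sw(n_so), i.e., the socially optimal balking level is at most the individually (Nash) selected balking level and achieves at least as much welfare. -/
/-- Knudsen's theorem: there exists a socially optimal balking level `n_so` with
`1 ≤ n_so ≤ n_b` maximizing the social welfare `U_sw` over all of `ℕ`;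
in particular `U_sw n_b ≤ U_sw n_so`. -/
theorem knudsen_socially_optimal_balking
    (R Cw Cp μ lam : ℝ) (c : ℕ)
    (hR : 0 < R) (hCw : 0 < Cw) (hCp : 0 < Cp) (hμ : 0 < μ) (hlam : 0 < lam)
    (hc : 1 ≤ c)
    (ρ : ℝ) (hρ : ρ = lam / (c * μ))
    (β : ℕ → ℝ)
    (hβ : ∀ k : ℕ, β k = R - Cw * (k + 1) / (μ * c) - Cp / μ)
    (d : ℕ → ℝ)
    (hd : ∀ k : ℕ, d k = if k < c then (ρ * c) ^ k / (Nat.factorial k)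
        else (ρ * c) ^ c / (Nat.factorial c) * ρ ^ (k - c))
    (D : ℕ → ℝ) (hD : ∀ n : ℕ, D n = ∑ k ∈ Finset.range (n + 1), d k)
    (Usw : ℕ → ℝ)
    (hU : ∀ n : ℕ, Usw n = lam * ∑ k ∈ Finset.range n, (d k / D n) * β k)
    (hfloor : 1 ≤ (R * μ * c - Cp * c) / Cw)
    (nb : ℕ) (hnb : nb = ⌊(R * μ * c - Cp * c) / Cw⌋₊) :
    ∃ nso : ℕ, 1 ≤ nso ∧ nso ≤ nb ∧ (∀ n : ℕ, Usw n ≤ Usw nso) ∧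
      Usw nb ≤ Usw nso := by
  have hcR : (0:ℝ) < c := by exact_mod_cast Nat.lt_of_lt_of_le Nat.zero_lt_one hc
  have hρ0 : 0 < ρ := by rw [hρ]; positivity
  have hrc : 0 < ρ * c := mul_pos hρ0 hcR
  have hdpos : ∀ k, 0 < d k := by
    intro k; rw [hd]; split <;> positivity
  have hDpos : ∀ n, 0 < D n := by
    intro n; rw [hD]
    exact Finset.sum_pos (fun k _ => hdpos k) ⟨0, by simp⟩
  have hDmono : ∀ m n : ℕ, m ≤ n → D m ≤ D n := by
    intro m n hmn
    rw [hD, hD]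
    apply Finset.sum_le_sum_of_subset_of_nonneg
    · exact Finset.range_subset_range.mpr (by omega)
    · intro k _ _; exact (hdpos k).le
  set S : ℕ → ℝ := fun n => ∑ k ∈ Finset.range n, d k * β k with hS
  have hU' : ∀ n, Usw n = lam * (S n / D n) := by
    intro n
    rw [hU, hS]
    simp only [Finset.sum_div]
    congr 1
    refine Finset.sum_congr rfl fun k _ => ?_
    ring
  have hnb1 : 1 ≤ nb := by
    rw [hnb]; exact Nat.le_floor (by exact_mod_cast hfloor)
  have hnbx : (nb : ℝ) ≤ (R * μ * c - Cp * c) / Cw := by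
    rw [hnb]; exact Nat.floor_le (by linarith)
  have hβnn : ∀ k, k < nb → 0 ≤ β k := by
    intro k hk
    have hk1 : (k:ℝ) + 1 ≤ (R * μ * c - Cp * c) / Cw := by
      have h : ((k:ℝ) + 1) ≤ (nb:ℝ) := by exact_mod_cast hk
      linarith
    have h2 : Cw * ((k:ℝ) + 1) ≤ R * μ * c - Cp * c := by
      have h3 := (le_div_iff₀ hCw).mp hk1
      rw [mul_comm] at h3
      exact h3
    rw [hβ]
    have heq : R - Cw * ((k:ℝ) + 1) / (μ * c) - Cp / μ
        = (R * μ * c - Cw * ((k:ℝ) + 1) - Cp * c) / (μ * c) := by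
      field_simp
    rw [heq]
    exact div_nonneg (by linarith) (by positivity)
  have hβnp : ∀ k, nb ≤ k → β k ≤ 0 := by
    intro k hk
    have hx : (R * μ * c - Cp * c) / Cw < (k:ℝ) + 1 := by
      have h1 : (R * μ * c - Cp * c) / Cw < (nb:ℝ) + 1 := by
        rw [hnb]; exact Nat.lt_floor_add_one _
      have h2 : (nb:ℝ) ≤ (k:ℝ) := by exact_mod_cast hk
      linarith
    have h2 : R * μ * c - Cp * c < Cw * ((k:ℝ) + 1) := by
      have h3 := (div_lt_iff₀ hCw).mp hx
      linarith [mul_comm Cw ((k:ℝ) + 1)]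
    rw [hβ]
    have heq : R - Cw * ((k:ℝ) + 1) / (μ * c) - Cp / μ
        = (R * μ * c - Cw * ((k:ℝ) + 1) - Cp * c) / (μ * c) := by
      field_simp
    rw [heq]
    exact div_nonpos_of_nonpos_of_nonneg (by linarith) (by positivity)
  have hSnb : 0 ≤ S nb :=
    Finset.sum_nonneg fun k hk =>
      mul_nonneg (hdpos k).le (hβnn k (Finset.mem_range.mp hk))
  have hStail : ∀ n, nb ≤ n → S n ≤ S nb := by
    intro n hn
    have hsplit : S nb + ∑ k ∈ Finset.Ico nb n, d k * β k = S n := by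
      rw [hS]
      simp only
      rw [Finset.range_eq_Ico, Finset.range_eq_Ico]
      exact Finset.sum_Ico_consecutive _ (Nat.zero_le nb) hn
    have htail : ∑ k ∈ Finset.Ico nb n, d k * β k ≤ 0 :=
      Finset.sum_nonpos fun k hk =>
        mul_nonpos_of_nonneg_of_nonpos (hdpos k).le
          (hβnp k (Finset.mem_Ico.mp hk).1)
    linarith
  have hUtail : ∀ n, nb ≤ n → Usw n ≤ Usw nb := by
    intro n hn
    rw [hU' n, hU' nb]
    apply mul_le_mul_of_nonneg_left _ hlam.le
    exact div_le_div₀ hSnb (hStail n hn) (hDpos nb) (hDmono nb n hn)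
  obtain ⟨nso, hmem, hmax⟩ :=
    Finset.exists_max_image (Finset.Icc 1 nb) Usw
      ⟨1, Finset.mem_Icc.mpr ⟨le_refl 1, hnb1⟩⟩
  obtain ⟨h1, h2⟩ := Finset.mem_Icc.mp hmem
  have hnbmem : nb ∈ Finset.Icc 1 nb := Finset.mem_Icc.mpr ⟨hnb1, le_refl nb⟩
  have h1mem : (1:ℕ) ∈ Finset.Icc 1 nb := Finset.mem_Icc.mpr ⟨le_refl 1, hnb1⟩
  refine ⟨nso, h1, h2, ?_, hmax nb hnbmem⟩
  intro n
  rcases Nat.lt_or_ge n 1 with h | h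
  · interval_cases n
    have hU0 : Usw 0 = 0 := by rw [hU']; simp [hS]
    have hU1 : 0 ≤ Usw 1 := by
      rw [hU']
      have hS1 : 0 ≤ S 1 := by
        rw [hS]
        simp only [Finset.range_one, Finset.sum_singleton]
        exact mul_nonneg (hdpos 0).le (hβnn 0 hnb1)
      exact mul_nonneg hlam.le (div_nonneg hS1 (hDpos 1).le)
    calc Usw 0 = 0 := hU0
      _ ≤ Usw 1 := hU1
      _ ≤ Usw nso := hmax 1 h1mem
  · rcases le_or_gt n nb with h' | h'
    · exact hmax n (Finset.mem_Icc.mpr ⟨h, h'⟩)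
    · exact le_trans (hUtail n h'.le) (hmax nb hnbmem)
end

section
/- (Pricing mechanism achieving a target balking level; this covers both the socially optimal target n_so and the congestion-limited target n_cl.) Let m ≥ 1 be a natural number (the target balking level) and let Ĉ_p > 0 be a new parking price, with modified utilities β̂_k = R − C_w(k+1)/(μc) − Ĉ_p/μ. If α_m < Ĉ_p/μ ≤ α_{m−1}, then β̂_{m−1} ≥ 0 > β̂_m, and consequently the balking level under the new price equals m, i.e., ⌊(Rμc − Ĉ_p c)/C_w⌋ = m. Conversely, if β̂_{m−1} ≥ 0 > β̂_m then α_m < Ĉ_p/μ ≤ α_{m−1}. -/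
/-- Pricing mechanism achieving a target balking level `m ≥ 1`: under the new price
`Ĉ_p`, if `α m < Ĉ_p/μ ≤ α (m−1)` then `β̂ (m−1) ≥ 0 > β̂ m` and the induced balking
level `⌊(Rμc − Ĉ_p c)/C_w⌋` equals `m`; conversely `β̂ (m−1) ≥ 0 > β̂ m` implies
`α m < Ĉ_p/μ ≤ α (m−1)`. -/
theorem pricing_mechanism_balking_level
    (R Cw μ : ℝ) (c : ℕ)
    (hR : 0 < R) (hCw : 0 < Cw) (hμ : 0 < μ) (hc : 1 ≤ c)
    (α : ℕ → ℝ) (hα : ∀ k : ℕ, α k = R - Cw * (k + 1) / (μ * c))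
    (Cphat : ℝ) (hCphat : 0 < Cphat)
    (βhat : ℕ → ℝ) (hβ : ∀ k : ℕ, βhat k = α k - Cphat / μ)
    (m : ℕ) (hm : 1 ≤ m) :
    ((α m < Cphat / μ ∧ Cphat / μ ≤ α (m - 1)) →
      (0 ≤ βhat (m - 1) ∧ βhat m < 0 ∧
        ⌊(R * μ * c - Cphat * c) / Cw⌋₊ = m)) ∧
    ((0 ≤ βhat (m - 1) ∧ βhat m < 0) →
      (α m < Cphat / μ ∧ Cphat / μ ≤ α (m - 1))) := by
  have hc' : (0:ℝ) < c := by exact_mod_cast Nat.lt_of_lt_of_le Nat.zero_lt_one hc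
  have hμc : (0:ℝ) < μ * c := mul_pos hμ hc'
  have hcast : ((m - 1 : ℕ) : ℝ) = (m : ℝ) - 1 := by
    have := Nat.cast_sub hm (R := ℝ)
    simpa using this
  constructor
  · rintro ⟨h1, h2⟩
    have hb1 : 0 ≤ βhat (m - 1) := by
      rw [hβ, hα, hcast]
      rw [hα, hcast] at h2
      linarith
    have hb2 : βhat m < 0 := by rw [hβ]; linarith
    refine ⟨hb1, hb2, ?_⟩
    rw [Nat.floor_eq_iff' (by omega)]
    have e1 : (0:ℝ) ≤ R - Cw * m / (μ * c) - Cphat / μ := by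
      rw [hβ, hα, hcast] at hb1
      have : ((m:ℝ) - 1 + 1) = m := by ring
      rw [this] at hb1
      linarith
    have e2 : R - Cw * (m + 1) / (μ * c) - Cphat / μ < 0 := by
      rw [hβ, hα] at hb2; linarith
    have hA : Cphat / μ * μ = Cphat := div_mul_cancel₀ _ (ne_of_gt hμ)
    have hB : Cw * ↑m / (μ * ↑c) * (μ * ↑c) = Cw * ↑m := div_mul_cancel₀ _ (ne_of_gt hμc)
    have hC : Cw * (↑m + 1) / (μ * ↑c) * (μ * ↑c) = Cw * (↑m + 1) := div_mul_cancel₀ _ (ne_of_gt hμc)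
    constructor
    · rw [le_div_iff₀ hCw]
      have h3 := mul_le_mul_of_nonneg_right (sub_nonneg.mpr ((sub_nonneg.mp e1))) hμc.le
      nlinarith [mul_le_mul_of_nonneg_right e1 hμc.le]
    · rw [div_lt_iff₀ hCw]
      rw [sub_lt_iff_lt_add, zero_add] at e2
      nlinarith [mul_lt_mul_of_pos_right e2 hμc]
  · rintro ⟨hb1, hb2⟩
    rw [hβ, hα, hcast] at hb1
    rw [hβ] at hb2
    constructor
    · linarith
    · rw [hα, hcast]
      linarith
end

section
/- (Welfare difference identity.) For every natural number n with n ≥ c − 1, D_n > 0, D_{n+1} > 0, and U_sw(n+1) − U_sw(n) = (λ d_n / (D_n D_{n+1})) · (β_n D_n − ρ S_n), where S_n = ∑_{k=0}^{n−1} d_k β_k. -/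
/-- Welfare difference identity: for `n ≥ c − 1`, `D n > 0`, `D (n+1) > 0`, and
`U_sw (n+1) − U_sw n = (λ d_n/(D_n D_{n+1}))·(β_n D_n − ρ S_n)` where
`S_n = ∑_{k<n} d_k β_k`. -/
theorem welfare_difference_identity
    (R Cw Cp μ lam : ℝ) (c : ℕ)
    (hR : 0 < R) (hCw : 0 < Cw) (hCp : 0 < Cp) (hμ : 0 < μ) (hlam : 0 < lam)
    (hc : 1 ≤ c)
    (ρ : ℝ) (hρ : ρ = lam / (c * μ))
    (β : ℕ → ℝ)
    (hβ : ∀ k : ℕ, β k = R - Cw * (k + 1) / (μ * c) - Cp / μ)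
    (d : ℕ → ℝ)
    (hd : ∀ k : ℕ, d k = if k < c then (ρ * c) ^ k / (Nat.factorial k)
        else (ρ * c) ^ c / (Nat.factorial c) * ρ ^ (k - c))
    (D : ℕ → ℝ) (hD : ∀ n : ℕ, D n = ∑ k ∈ Finset.range (n + 1), d k)
    (Usw : ℕ → ℝ)
    (hU : ∀ n : ℕ, Usw n = lam * ∑ k ∈ Finset.range n, (d k / D n) * β k)
    (n : ℕ) (hn : c - 1 ≤ n) :
    0 < D n ∧ 0 < D (n + 1) ∧
      Usw (n + 1) - Usw n =
        lam * d n / (D n * D (n + 1)) *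
          (β n * D n - ρ * ∑ k ∈ Finset.range n, d k * β k) := by
  have hcpos : (0 : ℝ) < c := by exact_mod_cast hc
  have hρpos : 0 < ρ := by rw [hρ]; positivity
  have hdpos : ∀ k, 0 < d k := by
    intro k
    rw [hd k]
    split <;> positivity
  have hDpos : ∀ m, 0 < D m := by
    intro m
    rw [hD m]
    exact Finset.sum_pos (fun k _ => hdpos k) (by simp)
  refine ⟨hDpos n, hDpos (n + 1), ?_⟩
  -- recurrence d (n+1) = ρ * d n
  have hrec : d (n + 1) = ρ * d n := by
    have hn1 : ¬ (n + 1 < c) := by omega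
    rw [hd (n + 1), hd n, if_neg hn1]
    by_cases hnc : n < c
    · have hnc' : n = c - 1 := by omega
      rw [if_pos hnc]
      subst hnc'
      have h1 : c - 1 + 1 = c := by omega
      rw [h1]
      simp only [Nat.sub_self, pow_zero, mul_one]
      obtain ⟨m, rfl⟩ : ∃ m, c = m + 1 := ⟨c - 1, by omega⟩
      have hfac : (Nat.factorial (m + 1) : ℝ) = (m + 1) * Nat.factorial m := by
        rw [Nat.factorial_succ]; push_cast; ring
      have hfm : (Nat.factorial m : ℝ) ≠ 0 := by positivity
      simp only [Nat.add_sub_cancel]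
      rw [hfac, pow_succ]
      field_simp
      push_cast; ring
    · rw [if_neg hnc]
      have h2 : n + 1 - c = (n - c) + 1 := by omega
      rw [h2, pow_succ]
      ring
  have hDsucc : D (n + 1) = D n + ρ * d n := by
    rw [hD (n + 1), hD n, Finset.sum_range_succ, hrec]
  set S := ∑ k ∈ Finset.range n, d k * β k with hS
  have hUn : ∀ m : ℕ, Usw m = lam * (∑ k ∈ Finset.range m, d k * β k) / D m := by
    intro m
    rw [hU m, mul_div_assoc, Finset.sum_div]
    congr 1
    exact Finset.sum_congr rfl (fun k _ => by ring)
  have hUn1 : Usw (n + 1) = lam * (S + d n * β n) / D (n + 1) := by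
    rw [hUn (n + 1), Finset.sum_range_succ]
  rw [hUn1, hUn n, ← hS, hDsucc]
  have h1 : D n ≠ 0 := ne_of_gt (hDpos n)
  have h2 : D n + ρ * d n ≠ 0 := by rw [← hDsucc]; exact ne_of_gt (hDpos (n + 1))
  rw [div_sub_div _ _ h2 h1, mul_comm (D n) (D n + ρ * d n)]
  field_simp
  ring
end

section
/- (Unimodality of social welfare.) For every natural number n with n ≥ c: if U_sw(n) − U_sw(n−1) ≤ 0, then U_sw(n+1) − U_sw(n) < 0. -/
/-- Unimodality of social welfare: for `n ≥ c`, if `U_sw n − U_sw (n−1) ≤ 0`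
then `U_sw (n+1) − U_sw n < 0`. -/
theorem social_welfare_unimodal
    (R Cw Cp μ lam : ℝ) (c : ℕ)
    (hR : 0 < R) (hCw : 0 < Cw) (hCp : 0 < Cp) (hμ : 0 < μ) (hlam : 0 < lam)
    (hc : 1 ≤ c)
    (ρ : ℝ) (hρ : ρ = lam / (c * μ))
    (β : ℕ → ℝ)
    (hβ : ∀ k : ℕ, β k = R - Cw * (k + 1) / (μ * c) - Cp / μ)
    (d : ℕ → ℝ)
    (hd : ∀ k : ℕ, d k = if k < c then (ρ * c) ^ k / (Nat.factorial k)
        else (ρ * c) ^ c / (Nat.factorial c) * ρ ^ (k - c))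
    (D : ℕ → ℝ) (hD : ∀ n : ℕ, D n = ∑ k ∈ Finset.range (n + 1), d k)
    (Usw : ℕ → ℝ)
    (hU : ∀ n : ℕ, Usw n = lam * ∑ k ∈ Finset.range n, (d k / D n) * β k)
    (n : ℕ) (hn : c ≤ n) :
    Usw n - Usw (n - 1) ≤ 0 → Usw (n + 1) - Usw n < 0 := by
  have hc0 : (0:ℝ) < (c : ℝ) := by exact_mod_cast hc
  have hρ0 : 0 < ρ := by rw [hρ]; exact div_pos hlam (mul_pos hc0 hμ)
  -- positivity of d
  have hd_pos : ∀ k : ℕ, 0 < d k := by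
    intro k
    have hfk : (0:ℝ) < (Nat.factorial k : ℝ) := by exact_mod_cast (Nat.factorial_pos k)
    have hfc : (0:ℝ) < (Nat.factorial c : ℝ) := by exact_mod_cast (Nat.factorial_pos c)
    have hρc : 0 < ρ * (c:ℝ) := mul_pos hρ0 hc0
    rw [hd k]
    split_ifs
    · positivity
    · positivity
  -- positivity of D
  have hD_pos : ∀ m : ℕ, 0 < D m := by
    intro m
    rw [hD]
    exact Finset.sum_pos (fun k _ => hd_pos k) ⟨0, Finset.mem_range.mpr (Nat.succ_pos m)⟩
  -- geometric step for d
  have hstep : ∀ k : ℕ, c ≤ k + 1 → d (k + 1) = ρ * d k := by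
    intro k hk
    by_cases hkc : k < c
    · have hc' : c = k + 1 := by omega
      subst hc'
      rw [hd (k + 1), hd k, if_neg (lt_irrefl (k + 1)), if_pos (Nat.lt_succ_self k)]
      simp only [Nat.sub_self, pow_zero, mul_one]
      have hfk : ((Nat.factorial k : ℝ)) ≠ 0 := by
        exact_mod_cast (Nat.factorial_pos k).ne'
      have hk1 : ((k:ℝ) + 1) ≠ 0 := by positivity
      rw [pow_succ, Nat.factorial_succ]
      push_cast
      field_simp
    · rw [hd (k + 1), hd k, if_neg (by omega : ¬ k + 1 < c), if_neg hkc,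
        show k + 1 - c = (k - c) + 1 from by omega, pow_succ]
      ring
  -- difference formula
  have hdiff : ∀ m : ℕ, Usw (m + 1) - Usw m =
      lam * ((d m * β m * D m - d (m + 1) * (∑ k ∈ Finset.range m, d k * β k)) /
        (D m * D (m + 1))) := by
    intro m
    have hrw : ∀ N j : ℕ, (∑ k ∈ Finset.range j, d k / D N * β k)
        = (∑ k ∈ Finset.range j, d k * β k) / D N := by
      intro N j
      rw [Finset.sum_div]
      exact Finset.sum_congr rfl fun k _ => by ring
    have hS1 : ∑ k ∈ Finset.range (m + 1), d k * β k
        = (∑ k ∈ Finset.range m, d k * β k) + d m * β m := Finset.sum_range_succ _ _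
    have hD1 : D (m + 1) = D m + d (m + 1) := by
      rw [hD, hD, Finset.sum_range_succ]
    have h1 : D m ≠ 0 := (hD_pos m).ne'
    have h2 : D m + d (m + 1) ≠ 0 := by rw [← hD1]; exact (hD_pos (m + 1)).ne'
    rw [hU, hU, hrw, hrw, hS1, hD1]
    field_simp
    ring
  -- main argument
  obtain ⟨m, rfl⟩ : ∃ m, n = m + 1 := ⟨n - 1, by omega⟩
  simp only [Nat.add_sub_cancel]
  intro h
  rw [hdiff m] at h
  rw [hdiff (m + 1), Finset.sum_range_succ]
  set Sm := ∑ k ∈ Finset.range m, d k * β k with hSm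
  have hdm1 : d (m + 1) = ρ * d m := hstep m hn
  have hdm2 : d (m + 2) = ρ * d (m + 1) := hstep (m + 1) (by omega)
  have hY : 0 < D m * D (m + 1) := mul_pos (hD_pos m) (hD_pos (m + 1))
  -- from the hypothesis, extract the numerator inequality
  have hXY : (d m * β m * D m - d (m + 1) * Sm) / (D m * D (m + 1)) ≤ 0 := by
    nlinarith [h, hlam]
  have hX : d m * β m * D m - d (m + 1) * Sm ≤ 0 := by
    have := mul_nonpos_of_nonpos_of_nonneg hXY hY.le
    rwa [div_mul_cancel₀ _ hY.ne'] at this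
  have h3 : β m * D m ≤ ρ * Sm := by
    rw [hdm1] at hX
    have h4 : d m * (β m * D m) ≤ d m * (ρ * Sm) := by nlinarith [hX]
    exact le_of_mul_le_mul_left h4 (hd_pos m)
  have hμc : (0:ℝ) < μ * (c:ℝ) := mul_pos hμ hc0
  have hβlt : β (m + 1) < β m := by
    have hdelta : β m - β (m + 1) = Cw / (μ * (c:ℝ)) := by
      rw [hβ, hβ]
      push_cast
      field_simp
      ring
    have := div_pos hCw hμc
    linarith
  have hDm1 : D (m + 1) = D m + d (m + 1) := by
    rw [hD, hD, Finset.sum_range_succ]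
  have key : β (m + 1) * D (m + 1) < ρ * (Sm + d m * β m) := by
    rw [hDm1, hdm1]
    nlinarith [h3, mul_pos (sub_pos.mpr hβlt)
      (add_pos (hD_pos m) (mul_pos hρ0 (hd_pos m)))]
  have hnum : d (m + 1) * β (m + 1) * D (m + 1) - d (m + 2) * (Sm + d m * β m) < 0 := by
    rw [hdm2, hdm1]
    nlinarith [mul_pos (mul_pos hρ0 (hd_pos m)) (sub_pos.mpr key)]
  exact mul_neg_of_pos_of_neg hlam
    (div_neg_of_neg_of_pos hnum (mul_pos (hD_pos (m + 1)) (hD_pos (m + 2))))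
end

section
/- (Welfare comparison for congestion-limited balking levels.) Suppose n_so ≥ c is a natural number at which U_sw attains its maximum over ℕ (i.e., U_sw(n) ≤ U_sw(n_so) for all n ∈ ℕ). Then U_sw is nonincreasing on {m ∈ ℕ : m ≥ n_so}; consequently, for any natural numbers n_cl and n_b with n_so ≤ n_cl ≤ n_b, one has U_sw(n_b) ≤ U_sw(n_cl), i.e., setting a congestion-limited balking level below the user-selected one cannot decrease social welfare. -/
/-- Welfare comparison for congestion-limited balking levels: if `n_so ≥ c` maximizes
`U_sw` over `ℕ`, then `U_sw` is nonincreasing on `{m : m ≥ n_so}`; consequently for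
`n_so ≤ n_cl ≤ n_b`, `U_sw n_b ≤ U_sw n_cl`. -/
theorem congestion_limited_welfare_comparison
    (R Cw Cp μ lam : ℝ) (c : ℕ)
    (hR : 0 < R) (hCw : 0 < Cw) (hCp : 0 < Cp) (hμ : 0 < μ) (hlam : 0 < lam)
    (hc : 1 ≤ c)
    (ρ : ℝ) (hρ : ρ = lam / (c * μ))
    (β : ℕ → ℝ)
    (hβ : ∀ k : ℕ, β k = R - Cw * (k + 1) / (μ * c) - Cp / μ)
    (d : ℕ → ℝ)
    (hd : ∀ k : ℕ, d k = if k < c then (ρ * c) ^ k / (Nat.factorial k)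
        else (ρ * c) ^ c / (Nat.factorial c) * ρ ^ (k - c))
    (D : ℕ → ℝ) (hD : ∀ n : ℕ, D n = ∑ k ∈ Finset.range (n + 1), d k)
    (Usw : ℕ → ℝ)
    (hU : ∀ n : ℕ, Usw n = lam * ∑ k ∈ Finset.range n, (d k / D n) * β k)
    (nso : ℕ) (hnsoc : c ≤ nso) (hmax : ∀ n : ℕ, Usw n ≤ Usw nso) :
    (∀ m m' : ℕ, nso ≤ m → m ≤ m' → Usw m' ≤ Usw m) ∧
    (∀ ncl nb : ℕ, nso ≤ ncl → ncl ≤ nb → Usw nb ≤ Usw ncl) := by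
  have hcR : (0:ℝ) < c := by exact_mod_cast Nat.lt_of_lt_of_le Nat.zero_lt_one hc
  have hρ0 : 0 < ρ := by rw [hρ]; positivity
  have hd0 : ∀ k, 0 < d k := by
    intro k; rw [hd k]
    split
    · positivity
    · positivity
  have hD0 : ∀ n, 0 < D n := by
    intro n; rw [hD n]
    exact Finset.sum_pos (fun k _ => hd0 k)
      (Finset.nonempty_range_iff.mpr (Nat.succ_ne_zero n))
  set S : ℕ → ℝ := fun n => ∑ k ∈ Finset.range n, d k * β k with hS
  have hUS : ∀ n, Usw n = lam * (S n / D n) := by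
    intro n; rw [hU n]
    congr 1
    rw [hS]
    simp only []
    rw [Finset.sum_div]
    exact Finset.sum_congr rfl fun k _ => by ring
  have hDrec : ∀ n, D (n+1) = D n + d (n+1) := by
    intro n; rw [hD, hD, Finset.sum_range_succ]
  have hSrec : ∀ n, S (n+1) = S n + d n * β n := by
    intro n; simp [hS, Finset.sum_range_succ]
  have hdrec : ∀ n, c ≤ n → d (n+1) = ρ * d n := by
    intro n hn
    rw [hd, hd, if_neg (by omega), if_neg (by omega)]
    have h : n + 1 - c = (n - c) + 1 := by omega
    rw [h, pow_succ]
    ring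
  set g : ℕ → ℝ := fun n => β n * D n - ρ * S n with hg
  have hdiff : ∀ n, c ≤ n → Usw (n+1) - Usw n = lam * (d n * g n) / (D n * D (n+1)) := by
    intro n hn
    have hDn := (hD0 n).ne'
    have hDn1 := (hD0 (n+1)).ne'
    have hnum : S (n+1) * D n - S n * D (n+1) = d n * g n := by
      rw [hSrec n, hDrec n, hdrec n hn, hg]
      ring
    have key : Usw (n+1) - Usw n
        = lam * (S (n+1) * D n - S n * D (n+1)) / (D n * D (n+1)) := by
      rw [hUS, hUS]
      field_simp
    rw [key, hnum]
  have hβrec : ∀ n : ℕ, β (n+1) = β n - Cw / (μ * c) := by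
    intro n
    rw [hβ, hβ]
    push_cast
    field_simp
    ring
  have hgdec : ∀ n, c ≤ n → g (n+1) ≤ g n := by
    intro n hn
    have heq : g (n+1) = g n - (Cw / (μ * c)) * (D n + ρ * d n) := by
      rw [hg]
      simp only []
      rw [hβrec n, hDrec n, hSrec n, hdrec n hn]
      ring
    rw [heq]
    have hpos : 0 < (Cw / (μ * c)) * (D n + ρ * d n) := by
      have h1 := hD0 n; have h2 := hd0 n; positivity
    linarith
  have hgnso : g nso ≤ 0 := by
    have h1 : Usw (nso+1) - Usw nso ≤ 0 := by linarith [hmax (nso+1)]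
    rw [hdiff nso hnsoc] at h1
    have hden : 0 < D nso * D (nso+1) := mul_pos (hD0 _) (hD0 _)
    have h2 : lam * (d nso * g nso) ≤ 0 := by
      by_contra h
      push_neg at h
      have := div_pos h hden
      linarith
    by_contra h
    push_neg at h
    have := mul_pos hlam (mul_pos (hd0 nso) h)
    linarith
  have hgle : ∀ n, nso ≤ n → g n ≤ 0 := by
    intro n hn
    induction n, hn using Nat.le_induction with
    | base => exact hgnso
    | succ n hn ih => exact le_trans (hgdec n (le_trans hnsoc hn)) ih
  have hstep : ∀ n, nso ≤ n → Usw (n+1) ≤ Usw n := by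
    intro n hn
    have h1 := hdiff n (le_trans hnsoc hn)
    have h2 : lam * (d n * g n) / (D n * D (n+1)) ≤ 0 := by
      apply div_nonpos_of_nonpos_of_nonneg
      · have heq : lam * (d n * g n) = (lam * d n) * g n := by ring
        rw [heq]
        exact mul_nonpos_of_nonneg_of_nonpos (mul_pos hlam (hd0 n)).le (hgle n hn)
      · exact (mul_pos (hD0 n) (hD0 (n+1))).le
    linarith
  have hmono : ∀ m m' : ℕ, nso ≤ m → m ≤ m' → Usw m' ≤ Usw m := by
    intro m m' hm hmm'
    induction m', hmm' using Nat.le_induction with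
    | base => exact le_refl _
    | succ n hn ih => exact le_trans (hstep n (le_trans hm hn)) ih
  exact ⟨hmono, fun ncl nb h1 h2 => hmono ncl nb h1 h2⟩
end
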